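/- For every positive integer m, the number of Λ_o-partitions of 2m equals o(m) − 1 if m is odd, and equals o(m) if m is even, where o(m) denotes the number of partitions of m into odd parts. (This is the coefficient form of the generating function identity ∑_{n≥0} ρ_o(n) q^n = 1/(q²;q⁴)_∞ − q²/(1−q⁴) − 1.) -/

import Mathlib

/-- Λ_o: a Λ-partition (largest part `ℓ` appears exactly once, every other part
is strictly less than `ℓ`, and `n = 2 * ℓ`) in which every part other than the
largest part is odd. -/
def IsLambdaO {n : ℕ} (p : n.Partition) : Prop :=
  ∃ ℓ ∈ p.parts, p.parts.count ℓ = 1 ∧ (∀ a ∈ p.parts, a ≠ ℓ → a < ℓ ∧ Odd a) ∧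
    n = 2 * ℓ

open Multiset

/-- The key set: odd partitions of m avoiding part m. -/
def Savoid (m : ℕ) : Finset (Nat.Partition m) :=
  (Nat.Partition.odds m).filter fun q => m ∉ q.parts

lemma lambdaO_spec {m : ℕ} {p : (2 * m).Partition} (h : IsLambdaO p) :
    m ∈ p.parts ∧ p.parts.count m = 1 ∧ ∀ a ∈ p.parts, a ≠ m → a < m ∧ Odd a := by
  obtain ⟨ℓ, h1, h2, h3, h4⟩ := h
  have hlm : ℓ = m := by omega
  subst hlm
  exact ⟨h1, h2, h3⟩

def fwd (m : ℕ) (p : {p : (2 * m).Partition // IsLambdaO p}) : {q // q ∈ Savoid m} := by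
  refine ⟨⟨p.1.parts.erase m, ?_, ?_⟩, ?_⟩
  · intro i hi
    exact p.1.parts_pos (Multiset.mem_of_mem_erase hi)
  · obtain ⟨hmem, hcount, hlt⟩ := lambdaO_spec p.2
    have h1 := p.1.parts_sum
    have h2 := Multiset.sum_erase hmem
    omega
  · obtain ⟨hmem, hcount, hlt⟩ := lambdaO_spec p.2
    have hnot : m ∉ p.1.parts.erase m := by
      rw [← Multiset.count_eq_zero, Multiset.count_erase_self, hcount]
    simp only [Savoid, Finset.mem_filter, Nat.Partition.odds, Nat.Partition.restricted, Finset.mem_filter,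
      Finset.mem_univ, true_and]
    refine ⟨fun i hi => ?_, hnot⟩
    have hi' := Multiset.mem_of_mem_erase hi
    have hne : i ≠ m := fun h => hnot (h ▸ hi)
    exact Nat.not_even_iff_odd.mpr (hlt i hi' hne).2

lemma fwd_parts (m : ℕ) (p : {p : (2 * m).Partition // IsLambdaO p}) :
    (fwd m p).1.parts = p.1.parts.erase m := rfl

def bwd (m : ℕ) (hm : 0 < m) (q : {q // q ∈ Savoid m}) :
    {p : (2 * m).Partition // IsLambdaO p} := by
  refine ⟨⟨m ::ₘ q.1.parts, ?_, ?_⟩, ?_⟩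
  · intro i hi
    rcases Multiset.mem_cons.mp hi with rfl | hi
    · exact hm
    · exact q.1.parts_pos hi
  · rw [Multiset.sum_cons, q.1.parts_sum]; ring
  · have hq := q.2
    simp only [Savoid, Finset.mem_filter, Nat.Partition.odds, Nat.Partition.restricted, Finset.mem_univ, true_and] at hq
    obtain ⟨hodd, hnot⟩ := hq
    refine ⟨m, Multiset.mem_cons_self _ _, ?_, ?_, rfl⟩
    · rw [Multiset.count_cons_self, Multiset.count_eq_zero.mpr hnot]
    · intro a ha hne
      rcases Multiset.mem_cons.mp ha with rfl | ha
      · exact absurd rfl hne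
      · have hle : a ≤ m := by
          have := Multiset.le_sum_of_mem ha
          rw [q.1.parts_sum] at this; exact this
        exact ⟨lt_of_le_of_ne hle hne, Nat.not_even_iff_odd.mp (hodd a ha)⟩

lemma bwd_parts (m : ℕ) (hm : 0 < m) (q : {q // q ∈ Savoid m}) :
    (bwd m hm q).1.parts = m ::ₘ q.1.parts := rfl

lemma card_key (m : ℕ) (hm : 0 < m) :
    Nat.card {p : (2 * m).Partition // IsLambdaO p} = (Savoid m).card := by
  rw [Nat.card_congr (Equiv.ofBijective (fwd m) ?_), Nat.card_eq_finsetCard]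
  constructor
  · intro p₁ p₂ h
    apply Subtype.ext; apply Nat.Partition.ext
    have h' : (fwd m p₁).1.parts = (fwd m p₂).1.parts := congrArg (fun x => x.1.parts) h
    rw [fwd_parts, fwd_parts] at h'
    obtain ⟨hm₁, _, _⟩ := lambdaO_spec p₁.2
    obtain ⟨hm₂, _, _⟩ := lambdaO_spec p₂.2
    rw [← Multiset.cons_erase hm₁, ← Multiset.cons_erase hm₂, h']
  · intro q
    refine ⟨bwd m hm q, ?_⟩
    apply Subtype.ext; apply Nat.Partition.ext
    rw [fwd_parts, bwd_parts, Multiset.erase_cons_head]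

/-- For every positive integer `m`, the number of Λ_o-partitions of `2m` equals
`o(m) - 1` if `m` is odd and `o(m)` if `m` is even, where `o(m)` counts
partitions of `m` into odd parts. -/
theorem stmt_3 (m : ℕ) (hm : 0 < m) :
    (Odd m → Nat.card {p : (2 * m).Partition // IsLambdaO p} =
      (Nat.Partition.odds m).card - 1) ∧
    (Even m → Nat.card {p : (2 * m).Partition // IsLambdaO p} =
      (Nat.Partition.odds m).card) := by
  rw [card_key m hm]
  constructor
  · intro hodd
    have hone : (Nat.Partition.odds m).filter (fun q => m ∈ q.parts)
        = {Nat.Partition.indiscrete m} := by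
      ext q
      simp only [Finset.mem_filter, Finset.mem_singleton, Nat.Partition.odds, Nat.Partition.restricted,
        Finset.mem_univ, true_and]
      constructor
      · rintro ⟨_, hmem⟩
        apply Nat.Partition.ext
        rw [Nat.Partition.indiscrete_parts hm.ne']
        have hsum := q.parts_sum
        have h2 := Multiset.sum_erase hmem
        have herase : q.parts.erase m = 0 := by
          rw [Multiset.eq_zero_iff_forall_notMem]
          intro a ha
          have hpos := q.parts_pos (Multiset.mem_of_mem_erase ha)
          have := Multiset.le_sum_of_mem ha
          omega
        rw [← Multiset.cons_erase hmem, herase]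
        rfl
      · rintro rfl
        rw [Nat.Partition.indiscrete_parts hm.ne']
        constructor
        · intro i hi
          rw [Multiset.mem_singleton] at hi
          subst hi
          exact Nat.not_even_iff_odd.mpr hodd
        · exact Multiset.mem_singleton_self m
    have hsplit := Finset.card_filter_add_card_filter_not
      (s := Nat.Partition.odds m) (p := fun q => m ∈ q.parts)
    rw [hone, Finset.card_singleton] at hsplit
    have : (Savoid m).card = ((Nat.Partition.odds m).filter fun q => ¬ m ∈ q.parts).card := rfl
    omega
  · intro heven
    have : Savoid m = Nat.Partition.odds m := by
      apply Finset.filter_true_of_mem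
      intro q hq
      simp only [Nat.Partition.odds, Nat.Partition.restricted, Finset.mem_filter, Finset.mem_univ, true_and] at hq
      intro hmem
      exact hq m hmem heven
    rw [this]
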